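/- Let $G_2 = \{(z_1, z_2) \in \mathbb{C}^2 : |z_1|(1 + |z_2|) < 1\}$. For every $x \in (0,1)$ and every $(X_1, X_2) \in \mathbb{C}^2$, the Carathéodory–Reiffen metric satisfies $\gamma_{G_2}((x,0); (X_1, X_2)) \geq \dfrac{|X_1 + x X_2|}{1 - x^2}$. -/

import Mathlib

open Complex

/-- The Carathéodory–Reiffen pseudometric of a domain `D ⊂ ℂ²`:
`γ_D(a;X) = sup { |f'(a)X| : f ∈ 𝒪(D,Δ), f(a) = 0 }`. -/
noncomputable def caratheodoryReiffen (D : Set (ℂ × ℂ)) (a X : ℂ × ℂ) : ℝ :=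
  sSup {r : ℝ | ∃ f : ℂ × ℂ → ℂ, DifferentiableOn ℂ f D ∧ (∀ z ∈ D, ‖f z‖ < 1) ∧
    f a = 0 ∧ r = ‖fderivWithin ℂ f D a X‖}

/-- Möbius factor estimate. -/
lemma moebius_norm_lt (x : ℝ) (hx0 : 0 < x) (hx1 : x < 1) (w : ℂ) (hw : ‖w‖ < 1) :
    ‖(w - (x : ℂ)) / (1 - (x : ℂ) * w)‖ < 1 := by
  have hnsq : Complex.normSq w < 1 := by
    have h : ‖w‖ ^ 2 < 1 := by nlinarith [norm_nonneg w]
    rwa [← Complex.sq_norm]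
  have key : Complex.normSq (w - (x : ℂ)) < Complex.normSq (1 - (x : ℂ) * w) := by
    simp only [Complex.normSq_apply, Complex.sub_re, Complex.sub_im, Complex.mul_re,
      Complex.mul_im, Complex.one_re, Complex.one_im, Complex.ofReal_re, Complex.ofReal_im]
    have hw' : w.re ^ 2 + w.im ^ 2 < 1 := by
      simpa [Complex.normSq_apply, sq] using hnsq
    nlinarith [mul_pos (by nlinarith : (0:ℝ) < 1 - x ^ 2)
      (by nlinarith : (0:ℝ) < 1 - (w.re ^ 2 + w.im ^ 2)), sq_nonneg w.re, sq_nonneg w.im]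
  have hden0 : (1 - (x : ℂ) * w) ≠ 0 := by
    intro h
    have : Complex.normSq (w - (x : ℂ)) < 0 := by simpa [h] using key
    exact absurd this (not_lt.2 (Complex.normSq_nonneg _))
  rw [norm_div, div_lt_one (norm_pos_iff.2 hden0)]
  have := Real.sqrt_lt_sqrt (Complex.normSq_nonneg _) key
  simpa [Complex.norm_def] using this

theorem caratheodory_lower_bound_G2 (x : ℝ) (hx : x ∈ Set.Ioo (0 : ℝ) 1) (X₁ X₂ : ℂ) :
    ‖X₁ + (x : ℂ) * X₂‖ / (1 - x ^ 2) ≤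
      caratheodoryReiffen {z : ℂ × ℂ | ‖z.1‖ * (1 + ‖z.2‖) < 1} ((x : ℂ), 0) (X₁, X₂) := by
  obtain ⟨hx0, hx1⟩ := hx
  have hx2 : (0 : ℝ) < 1 - x ^ 2 := by nlinarith
  set D : Set (ℂ × ℂ) := {z : ℂ × ℂ | ‖z.1‖ * (1 + ‖z.2‖) < 1} with hDdef
  set a : ℂ × ℂ := ((x : ℂ), 0) with hadef
  set X : ℂ × ℂ := (X₁, X₂) with hXdef
  have hDopen : IsOpen D := by
    have hc : Continuous fun z : ℂ × ℂ => ‖z.1‖ * (1 + ‖z.2‖) := by continuity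
    exact isOpen_lt hc continuous_const
  have haD : a ∈ D := by
    simp only [hDdef, Set.mem_setOf_eq, hadef, norm_zero, Complex.norm_real, Real.norm_eq_abs,
      abs_of_pos hx0]
    linarith
  -- The function F and the Möbius composition f₀
  set F : ℂ × ℂ → ℂ := fun z => z.1 * (1 + z.2) with hFdef
  have hFlt : ∀ z ∈ D, ‖F z‖ < 1 := by
    intro z hz
    calc ‖F z‖ = ‖z.1‖ * ‖1 + z.2‖ := norm_mul _ _
    _ ≤ ‖z.1‖ * (1 + ‖z.2‖) := by
        gcongr
        simpa using norm_add_le (1 : ℂ) z.2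
    _ < 1 := hz
  set f₀ : ℂ × ℂ → ℂ := fun z => (F z - (x : ℂ)) / (1 - (x : ℂ) * F z) with hf0def
  have hden : ∀ z ∈ D, (1 - (x : ℂ) * F z) ≠ 0 := by
    intro z hz h
    have h1 : (x : ℂ) * F z = 1 := by linear_combination -h
    have : ‖(x : ℂ) * F z‖ < 1 := by
      rw [norm_mul]
      calc ‖(x : ℂ)‖ * ‖F z‖ = x * ‖F z‖ := by
            rw [Complex.norm_real, Real.norm_eq_abs, abs_of_pos hx0]
      _ < 1 := by nlinarith [hFlt z hz, norm_nonneg (F z)]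
    rw [h1, norm_one] at this
    exact lt_irrefl _ this
  have hf0lt : ∀ z ∈ D, ‖f₀ z‖ < 1 := fun z hz => moebius_norm_lt x hx0 hx1 _ (hFlt z hz)
  have hFa : F a = (x : ℂ) := by simp [hFdef, hadef]
  have hf0a : f₀ a = 0 := by simp [hf0def, hFa]
  -- Differentiability of f₀ on D
  have hf0diff : DifferentiableOn ℂ f₀ D := by
    have hnum : DifferentiableOn ℂ (fun z : ℂ × ℂ => z.1 * (1 + z.2) - (x : ℂ)) D :=
      ((differentiable_fst.mul ((differentiable_const _).add differentiable_snd)).sub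
        (differentiable_const _)).differentiableOn
    have hd2 : DifferentiableOn ℂ (fun z : ℂ × ℂ => 1 - (x : ℂ) * (z.1 * (1 + z.2))) D :=
      ((differentiable_const (1 : ℂ)).sub ((differentiable_const ((x : ℂ))).mul
        (differentiable_fst.mul ((differentiable_const _).add differentiable_snd)))).differentiableOn
    have h := hnum.mul (hd2.inv hden)
    exact h.congr fun z hz => div_eq_mul_inv _ _
  -- Derivative computation
  have hF' : HasFDerivAt F
      (a.1 • (ContinuousLinearMap.snd ℂ ℂ ℂ) + (1 + a.2) • (ContinuousLinearMap.fst ℂ ℂ ℂ)) a := by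
    have h := (hasFDerivAt_fst (𝕜 := ℂ) (p := a)).mul
      ((hasFDerivAt_const (1 : ℂ) a).add (hasFDerivAt_snd (𝕜 := ℂ) (p := a)))
    simp at h; exact h
  set φ : ℂ → ℂ := fun w => (w - (x : ℂ)) / (1 - (x : ℂ) * w) with hφdef
  have hφ' : HasDerivAt φ ((1 - (x : ℂ) ^ 2)⁻¹) ((x : ℂ)) := by
    have hne : ((1 : ℂ) - (x : ℂ) ^ 2) ≠ 0 := by
      intro h
      have h2 : ((1 - x ^ 2 : ℝ) : ℂ) = 0 := by push_cast; linear_combination h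
      exact hx2.ne' (Complex.ofReal_eq_zero.mp h2)
    have hden' : (1 - (x : ℂ) * (x : ℂ)) ≠ 0 := by
      intro h; exact hne (by linear_combination h)
    have h1 : HasDerivAt (fun w : ℂ => w - (x : ℂ)) 1 ((x : ℂ)) := by
      simpa using (hasDerivAt_id ((x : ℂ))).sub_const ((x : ℂ))
    have h2 : HasDerivAt (fun w : ℂ => 1 - (x : ℂ) * w) (-(x : ℂ)) ((x : ℂ)) := by
      simpa using ((hasDerivAt_id ((x : ℂ))).const_mul ((x : ℂ))).const_sub 1
    have := h1.div h2 hden'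
    convert this using 1
    · rfl
    · rfl
    · rfl
    rw [sub_self, zero_mul, sub_zero, one_mul]
    rw [show (1 - (x : ℂ) * (x : ℂ)) = 1 - (x : ℂ) ^ 2 by ring]
    field_simp
  have hf0' : HasFDerivAt f₀
      ((1 - (x : ℂ) ^ 2)⁻¹ • (a.1 • (ContinuousLinearMap.snd ℂ ℂ ℂ)
        + (1 + a.2) • (ContinuousLinearMap.fst ℂ ℂ ℂ))) a := by
    have := hφ'.comp_hasFDerivAt_of_eq a hF' hFa.symm
    exact this
  have hval : fderivWithin ℂ f₀ D a X = (1 - (x : ℂ) ^ 2)⁻¹ * (X₁ + (x : ℂ) * X₂) := by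
    rw [fderivWithin_of_isOpen hDopen haD, hf0'.fderiv]
    simp [hadef, hXdef, ContinuousLinearMap.smul_apply]
    ring
  have hnorm : ‖fderivWithin ℂ f₀ D a X‖ = ‖X₁ + (x : ℂ) * X₂‖ / (1 - x ^ 2) := by
    rw [hval, norm_mul, norm_inv]
    have : ‖(1 : ℂ) - (x : ℂ) ^ 2‖ = 1 - x ^ 2 := by
      have : ((1 - x ^ 2 : ℝ) : ℂ) = 1 - (x : ℂ) ^ 2 := by push_cast; ring
      rw [← this, Complex.norm_real, Real.norm_eq_abs, abs_of_pos hx2]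
    rw [this, inv_mul_eq_div]
  -- membership
  have hmem : ‖X₁ + (x : ℂ) * X₂‖ / (1 - x ^ 2) ∈ {r : ℝ | ∃ f : ℂ × ℂ → ℂ,
      DifferentiableOn ℂ f D ∧ (∀ z ∈ D, ‖f z‖ < 1) ∧ f a = 0 ∧
      r = ‖fderivWithin ℂ f D a X‖} := ⟨f₀, hf0diff, hf0lt, hf0a, hnorm.symm⟩
  -- bounded above
  have hbdd : BddAbove {r : ℝ | ∃ f : ℂ × ℂ → ℂ, DifferentiableOn ℂ f D ∧
      (∀ z ∈ D, ‖f z‖ < 1) ∧ f a = 0 ∧ r = ‖fderivWithin ℂ f D a X‖} := by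
    obtain ⟨ε, hε0, hball⟩ := Metric.isOpen_iff.mp hDopen a haD
    set δ : ℝ := ε / (‖X‖ + 1) with hδdef
    have hδ0 : 0 < δ := div_pos hε0 (by positivity)
    refine ⟨1 / δ, fun r hr => ?_⟩
    obtain ⟨f, hfdiff, hflt, hfa, hreq⟩ := hr
    set g : ℂ → ℂ := fun t => f (a + t • X) with hgdef
    have hmem' : ∀ t ∈ Metric.ball (0 : ℂ) δ, a + t • X ∈ D := by
      intro t ht
      apply hball
      rw [Metric.mem_ball] at ht ⊢
      replace ht : ‖t‖ < δ := by simpa [Complex.dist_eq] using ht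
      rw [dist_eq_norm, add_sub_cancel_left, norm_smul]
      calc ‖t‖ * ‖X‖ ≤ ‖t‖ * (‖X‖ + 1) := by
            gcongr; linarith [norm_nonneg X]
      _ < δ * (‖X‖ + 1) := by
            nlinarith [norm_nonneg t, norm_nonneg X, ht, hδ0]
      _ = ε := by
            rw [hδdef]; field_simp
    have hgdiff : DifferentiableOn ℂ g (Metric.ball (0 : ℂ) δ) := by
      intro t ht
      have hD' : a + t • X ∈ D := hmem' t ht
      have : DifferentiableAt ℂ f (a + t • X) :=
        (hfdiff.differentiableAt (hDopen.mem_nhds hD'))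
      exact (this.comp t ((differentiableAt_id.smul_const X).const_add a)).differentiableWithinAt
    have hg0 : g 0 = 0 := by simp [hgdef, hfa]
    have hmaps : Set.MapsTo g (Metric.ball (0 : ℂ) δ) (Metric.ball (g 0) 1) := by
      intro t ht
      rw [hg0, Metric.mem_ball, dist_eq_norm, sub_zero]
      exact hflt _ (hmem' t ht)
    have hschwarz := Complex.norm_deriv_le_div_of_mapsTo_ball hgdiff (hmaps.mono_right Metric.ball_subset_closedBall) hδ0
    have hderiv : deriv g 0 = fderiv ℂ f a X := by
      have hfA : HasFDerivAt f (fderiv ℂ f a) a :=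
        (hfdiff.differentiableAt (hDopen.mem_nhds haD)).hasFDerivAt
      have hL : HasDerivAt (fun t : ℂ => a + t • X) X 0 := by
        simpa using ((hasDerivAt_id (0 : ℂ)).smul_const X).const_add a
      have hcomp : HasDerivAt g (fderiv ℂ f a X) 0 := by
        have h := hfA.comp_hasDerivAt_of_eq (x := (0 : ℂ)) hL (by simp)
        exact h
      exact hcomp.deriv
    rw [hreq, fderivWithin_of_isOpen hDopen haD]
    rw [hderiv] at hschwarz
    simpa using hschwarz
  exact le_csSup hbdd hmem
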